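/- Suppose 0 < α ≤ 1 and E_{a~N(0,I_n)}[γ_S(aᵀx*)] ≥ α. Then Pr[ Σ_{j=1}^m log(1/γ_S(A_j x*)) > 2m·log(1/α) ] ≤ α^m, where the probability is over the m i.i.d. truncated-sample rows A_1, …, A_m. -/

import Mathlib

open MeasureTheory ProbabilityTheory Real Filter Topology

noncomputable section

/-- Euclidean dot product on `Fin n → ℝ`. -/
def dot {n : ℕ} (a b : Fin n → ℝ) : ℝ := ∑ i, a i * b i

/-- Euclidean (ℓ²) norm on `Fin n → ℝ`. -/
def norm2 {n : ℕ} (v : Fin n → ℝ) : ℝ := Real.sqrt (∑ i, (v i) ^ 2)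

/-- ℓ¹ norm on `Fin n → ℝ`. -/
def norm1 {n : ℕ} (v : Fin n → ℝ) : ℝ := ∑ i, |v i|

/-- Support of a vector, as a finset. -/
def spt {n : ℕ} (v : Fin n → ℝ) : Finset (Fin n) := Finset.univ.filter fun i => v i ≠ 0

/-- Standard Gaussian measure `N(0, I_n)` on `Fin n → ℝ`. -/
def stdGaussianPi (n : ℕ) : Measure (Fin n → ℝ) := Measure.pi fun _ => gaussianReal 0 1

/-- Survival probability `γ_S(t) = Pr[Z + t ∈ S]`, `Z ~ N(0,1)`. -/
def gammaS (S : Set ℝ) (t : ℝ) : ℝ := (gaussianReal t 1 S).toReal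

/-- Truncated normal `N(t, 1; S)`. -/
def truncNormal (S : Set ℝ) (t : ℝ) : Measure ℝ := (gaussianReal t 1)[|S]

/-- `μ_t`, the mean of `N(t,1;S)`. -/
def truncMean (S : Set ℝ) (t : ℝ) : ℝ := ∫ z, z ∂(truncNormal S t)

/-- `Var(Z_t)`, the variance of `N(t,1;S)`. -/
def truncVar (S : Set ℝ) (t : ℝ) : ℝ := variance id (truncNormal S t)

/-- Constant survival probability assumption: `E_{a ~ N(0,I_n)}[γ_S(aᵀ x*)] ≥ α`. -/
def CSP (n : ℕ) (xstar : Fin n → ℝ) (S : Set ℝ) (α : ℝ) : Prop :=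
  α ≤ ∫ a, gammaS S (dot a xstar) ∂(stdGaussianPi n)

/-- `m` i.i.d. untruncated samples `(a_j, η_j)`, `a_j ~ N(0,I_n)`, `η_j ~ N(0,1)`. -/
def rawMeasure (m n : ℕ) : Measure (Fin m → (Fin n → ℝ) × ℝ) :=
  Measure.pi fun _ => (stdGaussianPi n).prod (gaussianReal 0 1)

/-- The law of `m` truncated samples: condition the `m` i.i.d. pairs `(a_j, η_j)` on all
responses `a_jᵀ x* + η_j` lying in `S`.  (Equivalently, each sample is i.i.d. from the
law of `(a, aᵀx* + η)` conditioned on `aᵀx* + η ∈ S`.) -/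
def dataMeasure (m n : ℕ) (xstar : Fin n → ℝ) (S : Set ℝ) :
    Measure (Fin m → (Fin n → ℝ) × ℝ) :=
  (rawMeasure m n)[|{ω | ∀ j, dot (ω j).1 xstar + (ω j).2 ∈ S}]

/-- The design matrix `A` (rows `A_j`) of a data set. -/
def mat {m n : ℕ} (ω : Fin m → (Fin n → ℝ) × ℝ) : Fin m → Fin n → ℝ := fun j => (ω j).1

/-- The response vector `y`, `y_j = A_jᵀ x* + η_j`. -/
def yvec {m n : ℕ} (xstar : Fin n → ℝ) (ω : Fin m → (Fin n → ℝ) × ℝ) : Fin m → ℝ :=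
  fun j => dot (ω j).1 xstar + (ω j).2

/-- Truncated negative log-likelihood. -/
def nll (S : Set ℝ) {m n : ℕ} (A : Fin m → Fin n → ℝ) (y : Fin m → ℝ) (x : Fin n → ℝ) : ℝ :=
  (1 / (m : ℝ)) * ∑ j, ((dot (A j) x - y j) ^ 2 / 2
    + Real.log (∫ z in S, Real.exp (-(dot (A j) x - z) ^ 2 / 2)))


lemma gauss_shift (S : Set ℝ) (hS : MeasurableSet S) (t : ℝ) :
    gaussianReal 0 1 {z | t + z ∈ S} = gaussianReal t 1 S := by
  have h := gaussianReal_map_add_const (μ := 0) (v := 1) t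
  rw [zero_add] at h
  rw [← h, Measure.map_apply (measurable_id'.add_const t) hS]
  congr 1
  ext z
  simp [add_comm]

lemma measurable_gauss (S : Set ℝ) (hS : MeasurableSet S) :
    Measurable fun t => gaussianReal t 1 S := by
  have h : ∀ t, gaussianReal t 1 S
      = gaussianReal 0 1 (Prod.mk t ⁻¹' {p : ℝ × ℝ | p.1 + p.2 ∈ S}) := by
    intro t
    rw [← gauss_shift S hS t]
    rfl
  rw [funext h]
  exact measurable_measure_prodMk_left ((measurable_fst.add measurable_snd) hS)

lemma measurable_gammaS (S : Set ℝ) (hS : MeasurableSet S) : Measurable (gammaS S) :=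
  (measurable_gauss S hS).ennreal_toReal

lemma measurable_dot {n : ℕ} (x : Fin n → ℝ) : Measurable fun a : Fin n → ℝ => dot a x := by
  unfold dot
  exact Finset.measurable_sum _ fun i _ => (measurable_pi_apply i).mul_const _

lemma prod_gamma_le {m : ℕ} (α : ℝ) (h0 : 0 < α) (γ : Fin m → ℝ) (hnn : ∀ j, 0 ≤ γ j)
    (h : 2 * m * Real.log (1 / α) < ∑ j, Real.log (1 / γ j)) :
    ∏ j, γ j ≤ α ^ (2 * m) := by
  by_cases hz : ∃ j, γ j = 0
  · obtain ⟨j, hj⟩ := hz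
    rw [Finset.prod_eq_zero (Finset.mem_univ j) hj]
    positivity
  · push_neg at hz
    have hpos : ∀ j, 0 < γ j := fun j => (hnn j).lt_of_ne (Ne.symm (hz j))
    have hsum : ∑ j, Real.log (γ j) < 2 * m * Real.log α := by
      have h1 : ∑ j, Real.log (1 / γ j) = -∑ j, Real.log (γ j) := by
        rw [← Finset.sum_neg_distrib]
        exact Finset.sum_congr rfl fun j _ => by rw [one_div, Real.log_inv]
      rw [h1, one_div, Real.log_inv] at h
      linarith
    calc ∏ j, γ j = Real.exp (∑ j, Real.log (γ j)) := by
          rw [Real.exp_sum]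
          exact (Finset.prod_congr rfl fun j _ => (Real.exp_log (hpos j)).symm)
      _ ≤ Real.exp (2 * m * Real.log α) := Real.exp_le_exp.2 hsum.le
      _ = α ^ (2 * m) := by
          rw [show (2 : ℝ) * m * Real.log α = ((2 * m : ℕ) : ℝ) * Real.log α by push_cast; ring,
            Real.exp_nat_mul, Real.exp_log h0]


/-- total survival probability bound (Lemma `total-survival`). -/
theorem total_survival_bound (n m : ℕ) (xstar : Fin n → ℝ) (S : Set ℝ)
    (hS : MeasurableSet S) (α : ℝ) (h0 : 0 < α) (h1 : α ≤ 1)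
    (hCSP : CSP n xstar S α) :
    dataMeasure m n xstar S
        {ω | 2 * m * Real.log (1 / α)
          < ∑ j, Real.log (1 / gammaS S (dot (mat ω j) xstar))}
      ≤ ENNReal.ofReal (α ^ m) := by
  classical
  haveI hPr : IsProbabilityMeasure (stdGaussianPi n) := by
    unfold stdGaussianPi; infer_instance
  set gp := stdGaussianPi n with hPrdef
  set g := gaussianReal (0 : ℝ) 1 with hgdef
  set ν := gp.prod g with hνdef
  have hdotm : Measurable fun a : Fin n → ℝ => dot a xstar := measurable_dot xstar
  have hγm : Measurable (gammaS S) := measurable_gammaS S hS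
  -- the conditioning event
  set E : Set (Fin m → (Fin n → ℝ) × ℝ) :=
    {ω | ∀ j, dot (ω j).1 xstar + (ω j).2 ∈ S} with hEdef
  set B : Set (Fin m → (Fin n → ℝ) × ℝ) :=
    {ω | 2 * m * Real.log (1 / α)
      < ∑ j, Real.log (1 / gammaS S (dot (mat ω j) xstar))} with hBdef
  -- single-sample survival set
  set T : Set ((Fin n → ℝ) × ℝ) := {p | dot p.1 xstar + p.2 ∈ S} with hTdef
  have hTm : MeasurableSet T := ((hdotm.comp measurable_fst).add measurable_snd) hS
  have hEm : MeasurableSet E := by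
    have : E = ⋂ j, (fun ω : Fin m → (Fin n → ℝ) × ℝ => ω j) ⁻¹' T := by
      ext ω; simp [hEdef, hTdef]
    rw [this]
    exact MeasurableSet.iInter fun j => (measurable_pi_apply j) hTm
  -- E has measure β0 ^ m
  set β0 : ENNReal := ν T with hβ0def
  have hEmeas : rawMeasure m n E = β0 ^ m := by
    have hE2 : E = Set.pi Set.univ (fun _ : Fin m => T) := by
      ext ω; simp [hEdef, hTdef, Set.mem_pi]
    rw [hE2]
    unfold rawMeasure
    rw [Measure.pi_pi]
    simp [hβ0def, hνdef, hPrdef, hgdef]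
  -- β0 as a lintegral
  have hβ0 : β0 = ∫⁻ a, gaussianReal (dot a xstar) 1 S ∂gp := by
    rw [hβ0def, hνdef, Measure.prod_apply hTm]
    refine lintegral_congr fun a => ?_
    have : (Prod.mk a ⁻¹' T) = {z | dot a xstar + z ∈ S} := rfl
    rw [this, hgdef, gauss_shift S hS]
  -- lower bound on β0
  have hβ0_le_one : β0 ≤ 1 := by
    rw [hβ0def]; exact prob_le_one
  have hαβ0 : ENNReal.ofReal α ≤ β0 := by
    apply ENNReal.ofReal_le_of_le_toReal
    have hmeas : AEMeasurable (fun a => gaussianReal (dot a xstar) 1 S) gp :=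
      ((measurable_gauss S hS).comp hdotm).aemeasurable
    have hint : ∫ a, gammaS S (dot a xstar) ∂gp
        = (∫⁻ a, gaussianReal (dot a xstar) 1 S ∂gp).toReal :=
      integral_toReal hmeas (ae_of_all _ fun a => measure_lt_top _ _)
    rw [← hβ0] at hint
    calc α ≤ ∫ a, gammaS S (dot a xstar) ∂gp := hCSP
      _ = β0.toReal := hint
  have hβ0_pos : β0 ≠ 0 := fun h => by
    rw [h] at hαβ0
    exact absurd (le_antisymm (le_of_le_of_eq hαβ0 rfl) (by simp))
      (by simp [ENNReal.ofReal_eq_zero, not_le, h0])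
  -- bound on rawMeasure (E ∩ B)
  have hEB : rawMeasure m n (E ∩ B) ≤ ENNReal.ofReal (α ^ (2 * m)) := by
    set B'' : Set (Fin m → Fin n → ℝ) := {A | 2 * m * Real.log (1 / α)
      < ∑ j, Real.log (1 / gammaS S (dot (A j) xstar))} with hB''def
    have hB''m : MeasurableSet B'' := by
      apply measurableSet_lt measurable_const
      apply Finset.measurable_sum
      intro j _
      apply Measurable.log
      apply Measurable.const_div
      exact hγm.comp (hdotm.comp (measurable_pi_apply j))
    set t : Set ((Fin m → Fin n → ℝ) × (Fin m → ℝ)) :=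
      {p | p.1 ∈ B'' ∧ ∀ j, dot (p.1 j) xstar + p.2 j ∈ S} with htdef
    have htm : MeasurableSet t := by
      have ht2 : t = (Prod.fst ⁻¹' B'')
          ∩ ⋂ j, (fun p : (Fin m → Fin n → ℝ) × (Fin m → ℝ) =>
            dot (p.1 j) xstar + p.2 j) ⁻¹' S := by
        ext p; simp [htdef]
      rw [ht2]
      exact (measurable_fst hB''m).inter (MeasurableSet.iInter fun j =>
        (((hdotm.comp ((measurable_pi_apply j).comp measurable_fst)).add
          ((measurable_pi_apply j).comp measurable_snd)) hS))
    have hmp := measurePreserving_arrowProdEquivProdArrow (Fin n → ℝ) ℝ (Fin m)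
      (fun _ => gp) (fun _ => g)
    have hpre : (MeasurableEquiv.arrowProdEquivProdArrow (Fin n → ℝ) ℝ (Fin m)) ⁻¹' t
        = E ∩ B := by
      ext ω
      simp only [MeasurableEquiv.arrowProdEquivProdArrow, Equiv.arrowProdEquivProdArrow,
        MeasurableEquiv.coe_mk, Equiv.coe_fn_mk, Set.mem_preimage, Set.mem_setOf_eq,
        Set.mem_inter_iff, htdef, hEdef, hBdef, hB''def, mat]
      tauto
    have h1 : rawMeasure m n (E ∩ B)
        = ((Measure.pi fun _ : Fin m => gp).prod (Measure.pi fun _ : Fin m => g)) t := by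
      rw [← hpre]
      exact hmp.measure_preimage htm.nullMeasurableSet
    rw [h1, Measure.prod_apply htm]
    have hbound : ∀ A : Fin m → Fin n → ℝ,
        (Measure.pi fun _ : Fin m => g) (Prod.mk A ⁻¹' t)
          ≤ Set.indicator B'' (fun _ => ENNReal.ofReal (α ^ (2 * m))) A := by
      intro A
      by_cases hA : A ∈ B''
      · rw [Set.indicator_of_mem hA]
        have hset : Prod.mk A ⁻¹' t
            = Set.pi Set.univ (fun j => {z | dot (A j) xstar + z ∈ S}) := by
          ext η
          simp [htdef, hA, Set.mem_pi]
        rw [hset, Measure.pi_pi]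
        have hterm : ∀ j : Fin m, g {z | dot (A j) xstar + z ∈ S}
            = ENNReal.ofReal (gammaS S (dot (A j) xstar)) := by
          intro j
          rw [hgdef, gauss_shift S hS]
          exact (ENNReal.ofReal_toReal (measure_ne_top _ _)).symm
        calc ∏ j : Fin m, g {z | dot (A j) xstar + z ∈ S}
            = ∏ j : Fin m, ENNReal.ofReal (gammaS S (dot (A j) xstar)) :=
              Finset.prod_congr rfl fun j _ => hterm j
          _ = ENNReal.ofReal (∏ j, gammaS S (dot (A j) xstar)) :=
              (ENNReal.ofReal_prod_of_nonneg fun j _ => ENNReal.toReal_nonneg).symm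
          _ ≤ ENNReal.ofReal (α ^ (2 * m)) := by
              apply ENNReal.ofReal_le_ofReal
              exact prod_gamma_le α h0 _ (fun j => ENNReal.toReal_nonneg) hA
      · rw [Set.indicator_of_notMem hA]
        have hset : Prod.mk A ⁻¹' t = ∅ := by
          ext η; simp [htdef, hA]
        simp [hset]
    calc ∫⁻ A, (Measure.pi fun _ : Fin m => g) (Prod.mk A ⁻¹' t) ∂(Measure.pi fun _ : Fin m => gp)
        ≤ ∫⁻ A, Set.indicator B'' (fun _ => ENNReal.ofReal (α ^ (2 * m))) A
            ∂(Measure.pi fun _ : Fin m => gp) := lintegral_mono hbound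
      _ = ENNReal.ofReal (α ^ (2 * m)) * (Measure.pi fun _ : Fin m => gp) B'' := by
          exact lintegral_indicator_const hB''m _
      _ ≤ ENNReal.ofReal (α ^ (2 * m)) * 1 := by
          gcongr
          exact prob_le_one
      _ = ENNReal.ofReal (α ^ (2 * m)) := mul_one _
  -- assemble
  have hcond : dataMeasure m n xstar S B = (rawMeasure m n E)⁻¹ * rawMeasure m n (E ∩ B) := by
    unfold dataMeasure
    exact cond_apply hEm (rawMeasure m n) B
  rw [hcond, hEmeas]
  set x := ENNReal.ofReal α with hxdef
  have hx0 : x ≠ 0 := by simp [hxdef, ENNReal.ofReal_eq_zero, not_le, h0]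
  have hxtop : x ≠ ⊤ := ENNReal.ofReal_ne_top
  have hxm : x ^ m ≤ β0 ^ m := pow_le_pow_left' hαβ0 m
  calc (β0 ^ m)⁻¹ * rawMeasure m n (E ∩ B)
      ≤ (x ^ m)⁻¹ * ENNReal.ofReal (α ^ (2 * m)) := by
        exact mul_le_mul' (ENNReal.inv_le_inv' hxm) hEB
    _ = (x ^ m)⁻¹ * (x ^ m * x ^ m) := by
        rw [ENNReal.ofReal_pow h0.le, hxdef, two_mul, pow_add]
    _ = x ^ m := by
        rw [← mul_assoc, ENNReal.inv_mul_cancel (pow_ne_zero m hx0)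
          (ENNReal.pow_ne_top hxtop), one_mul]
    _ = ENNReal.ofReal (α ^ m) := by rw [ENNReal.ofReal_pow h0.le]
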